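/- Let δ ≥ 2 and s be integers with δ + 1 ≤ s ≤ (n−1)/2 and n ≥ 8δ. Then for every real number x ≥ n + δ, x² + (2n − 5s − 5δ + 1)x − sn − δn + 2n + 2s² + 2δs − 5s + 2δ² − 5δ > 0. -/

import Mathlib

open SimpleGraph Finset

/-- The distance matrix of a graph: the `(i,j)` entry is the graph distance from `i` to `j`. -/
noncomputable def distMatrix {V : Type*} [Fintype V] (G : SimpleGraph V) : Matrix V V ℝ :=
  fun i j => (G.dist i j : ℝ)

/-- The distance spectral radius `λ₁(D(G))`: the largest eigenvalue of the distance matrix. -/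
noncomputable def distSpecRad {V : Type*} [Fintype V] (G : SimpleGraph V) : ℝ :=
  sSup {μ : ℝ | ∃ v : V → ℝ, v ≠ 0 ∧ (distMatrix G).mulVec v = μ • v}

/-- The join `G ∨ H` of two graphs: all edges between the parts are added. -/
def graphJoin {α β : Type*} (G : SimpleGraph α) (H : SimpleGraph β) :
    SimpleGraph (α ⊕ β) where
  Adj x y :=
    match x, y with
    | Sum.inl a, Sum.inl a' => G.Adj a a'
    | Sum.inr b, Sum.inr b' => H.Adj b b'
    | Sum.inl _, Sum.inr _ => True
    | Sum.inr _, Sum.inl _ => True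
  symm := ⟨by rintro (a | a) (b | b) h <;> first | exact G.adj_symm h | exact H.adj_symm h | trivial⟩
  loopless := ⟨by rintro (a | a) h <;> first | exact G.loopless.irrefl a h | exact H.loopless.irrefl a h⟩

/-- The disjoint union `G + H` of two graphs. -/
def graphSum {α β : Type*} (G : SimpleGraph α) (H : SimpleGraph β) :
    SimpleGraph (α ⊕ β) where
  Adj x y :=
    match x, y with
    | Sum.inl a, Sum.inl a' => G.Adj a a'
    | Sum.inr b, Sum.inr b' => H.Adj b b'
    | _, _ => False
  symm := ⟨by rintro (a | a) (b | b) h <;> first | exact G.adj_symm h | exact H.adj_symm h | exact h⟩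
  loopless := ⟨by rintro (a | a) h <;> first | exact G.loopless.irrefl a h | exact H.loopless.irrefl a h⟩

/-- `m` pairwise disjoint copies of the complete graph `K_p`. -/
def repK (m p : ℕ) : SimpleGraph (Fin m × Fin p) where
  Adj x y := x.1 = y.1 ∧ x ≠ y
  symm := ⟨fun _ _ h => ⟨h.1.symm, h.2.symm⟩⟩
  loopless := ⟨fun _ h => h.2 rfl⟩

/-- The disjoint union of cliques `K_{m 0} + K_{m 1} + ⋯`. -/
def cliquesGraph {c : ℕ} (m : Fin c → ℕ) : SimpleGraph (Σ i, Fin (m i)) where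
  Adj x y := x.1 = y.1 ∧ x ≠ y
  symm := ⟨fun _ _ h => ⟨h.1.symm, h.2.symm⟩⟩
  loopless := ⟨fun _ h => h.2 rfl⟩

/-- `G` is `t`-tough: whenever deleting a vertex set `S` disconnects the graph,
`|S| ≥ t · c(G - S)`. -/
def IsTTough {V : Type*} [Fintype V] (t : ℝ) (G : SimpleGraph V) : Prop :=
  ∀ S : Finset V, ¬ (G.induce ((S : Set V)ᶜ)).Connected →
    t * Nat.card (G.induce ((S : Set V)ᶜ)).ConnectedComponent ≤ (S.card : ℝ)

theorem stmt19 (δ s n : ℕ) (hδ : 2 ≤ δ) (hs : δ + 1 ≤ s) (hs2 : 2 * s + 1 ≤ n)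
    (hn : 8 * δ ≤ n) :
    ∀ x : ℝ, (n : ℝ) + (δ : ℝ) ≤ x →
      0 < x ^ 2 + (2 * (n : ℝ) - 5 * (s : ℝ) - 5 * (δ : ℝ) + 1) * x
        - (s : ℝ) * (n : ℝ) - (δ : ℝ) * (n : ℝ) + 2 * (n : ℝ) + 2 * (s : ℝ) ^ 2
        + 2 * (δ : ℝ) * (s : ℝ) - 5 * (s : ℝ) + 2 * (δ : ℝ) ^ 2 - 5 * (δ : ℝ) := by
  intro x hx
  have h1 : (2:ℝ) ≤ δ := by exact_mod_cast hδ
  have h2 : (δ:ℝ) + 1 ≤ s := by exact_mod_cast hs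
  have h3 : 2*(s:ℝ) + 1 ≤ n := by exact_mod_cast hs2
  have h4 : 8*(δ:ℝ) ≤ n := by exact_mod_cast hn
  nlinarith [sq_nonneg (x - (n:ℝ) - δ), sq_nonneg ((n:ℝ) - 2*s), mul_nonneg (sub_nonneg.2 hx) (sub_nonneg.2 hx), mul_nonneg (sub_nonneg.2 hx) (by linarith : (0:ℝ) ≤ (n:ℝ) - 2*s - 1), sq_nonneg ((s:ℝ)-δ)]
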